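/- arXiv:1901.01169 — 3 statements merged into one kernel-verified Lean document; each statement's English description precedes it below -/
import Mathlib

section
/- Let ν_t and ν̂_t be two families of sub-probability measures on (0,∞) solving the same forward equation ∂_t ν_t(Γ) = ∫ λ(t,ŝ)μ_t(ŝ,Γ) ν_t(dŝ) − ∫_Γ λ(t,ŝ) ν_t(dŝ) with the same initial measure ν, where ν_t is the minimal nonnegative solution. If ν_t((0,∞)) = 1 for all t (conservativity) and ν̂_t((0,∞)) ≤ 1, then ν̂_t(Γ) = ν_t(Γ) for every Borel set Γ and every t ≥ 0. -/
open MeasureTheory Set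

/-- Uniqueness via minimality and conservativity: if `ν t` is the minimal
nonnegative solution of the forward equation (so `ν t Γ ≤ nuh t Γ` for any other
nonnegative solution `nuh` with the same initial measure), `ν t` is conservative
(`ν t ((0,∞)) = 1`) and `nuh t` is a sub-probability measure on `(0,∞)`
(`nuh t ((0,∞)) ≤ 1`), then `nuh t Γ = ν t Γ` for every Borel `Γ ⊆ (0,∞)`. -/
theorem minimal_conservative_solution_unique
    (ν nuh : ℝ → Measure ℝ)
    (hsupp : ∀ t, ν t (Ioi 0)ᶜ = 0) (hsupp' : ∀ t, nuh t (Ioi 0)ᶜ = 0)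
    (hinit : ν 0 = nuh 0)
    (hmin : ∀ t, 0 ≤ t → ∀ Γ : Set ℝ, MeasurableSet Γ → Γ ⊆ Ioi 0 →
      ν t Γ ≤ nuh t Γ)
    (hcons : ∀ t, 0 ≤ t → ν t (Ioi 0) = 1)
    (hsub : ∀ t, 0 ≤ t → nuh t (Ioi 0) ≤ 1) :
    ∀ t, 0 ≤ t → ∀ Γ : Set ℝ, MeasurableSet Γ → Γ ⊆ Ioi 0 →
      nuh t Γ = ν t Γ := by
  intro t ht Γ hΓ hΓsub
  have h1 : ν t Γ ≤ nuh t Γ := hmin t ht Γ hΓ hΓsub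
  have h2 : ν t (Ioi 0 \ Γ) ≤ nuh t (Ioi 0 \ Γ) :=
    hmin t ht _ (measurableSet_Ioi.diff hΓ) (diff_subset)
  have hνsplit : ν t Γ + ν t (Ioi 0 \ Γ) = 1 := by
    rw [← measure_union' disjoint_sdiff_right hΓ, union_diff_cancel hΓsub, hcons t ht]
  have hnsplit : nuh t Γ + nuh t (Ioi 0 \ Γ) ≤ 1 := by
    rw [← measure_union' disjoint_sdiff_right hΓ, union_diff_cancel hΓsub]
    exact hsub t ht
  have hfin : nuh t (Ioi 0 \ Γ) ≠ ⊤ := by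
    intro h
    rw [h, add_top] at hnsplit
    exact (by simp : ¬ (⊤ : ENNReal) ≤ 1) hnsplit
  have hfin2 : ν t (Ioi 0 \ Γ) ≠ ⊤ := fun h => hfin (top_le_iff.mp (h ▸ h2))
  refine le_antisymm ?_ h1
  have key : nuh t Γ + ν t (Ioi 0 \ Γ) ≤ ν t Γ + ν t (Ioi 0 \ Γ) := by
    calc nuh t Γ + ν t (Ioi 0 \ Γ) ≤ nuh t Γ + nuh t (Ioi 0 \ Γ) := by gcongr
    _ ≤ 1 := hnsplit
    _ = ν t Γ + ν t (Ioi 0 \ Γ) := hνsplit.symm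
  exact ENNReal.add_le_add_iff_right hfin2 |>.mp key
end

section
/- The stationary solution of Niwa's flux equation: the probability flux J(x) = −(p̃/2)(x − x̄)ρ(x) − d/dx[D·exp(x/x̄)·ρ(x)] vanishes identically on (0,∞) when ρ(x) = (1/Z)·exp[−(x/x̄)(1 − γ·e^{−x/x̄})] with γ = p̃·x̄²/(2D). -/
open Real

/-- The probability flux `J(x) = −(pt/2)(x−xbar)ρ(x) − d/dx[D e^{x/xbar} ρ(x)]`
vanishes identically on `(0,∞)` for the stationary density
`ρ(x) = (1/Z) exp[−(x/xbar)(1 − γ e^{−x/xbar})]` with `γ = pt xbar²/(2D)`. -/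
theorem niwa_zero_flux (pt xbar D Z : ℝ) (hp : 0 < pt) (hxb : 0 < xbar)
    (hD : 0 < D) (hZ : 0 < Z) :
    ∀ x : ℝ, 0 < x →
      -(pt / 2) * (x - xbar) *
          ((1 / Z) * exp (-(x / xbar) * (1 - (pt * xbar ^ 2 / (2 * D)) * exp (-x / xbar)))) -
        deriv (fun y : ℝ =>
          D * exp (y / xbar) *
            ((1 / Z) * exp (-(y / xbar) * (1 - (pt * xbar ^ 2 / (2 * D)) * exp (-y / xbar))))) x
        = 0 := by
  intro x hx
  set γ := pt * xbar ^ 2 / (2 * D) with hγ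
  have hxb0 : xbar ≠ 0 := ne_of_gt hxb
  have hneg : HasDerivAt (fun y : ℝ => -(y / xbar)) (-(1 / xbar)) x := by
    simpa [Pi.neg_def] using ((hasDerivAt_id x).div_const xbar).neg
  have hneg' : HasDerivAt (fun y : ℝ => -y / xbar) (-(1 / xbar)) x := by
    simpa [neg_div] using hneg
  have hE : HasDerivAt (fun y : ℝ => exp (-y / xbar)) (exp (-x / xbar) * (-(1 / xbar))) x :=
    hneg'.exp
  have hinner : HasDerivAt (fun y : ℝ => 1 - γ * exp (-y / xbar))
      (-(γ * (exp (-x / xbar) * (-(1 / xbar))))) x := by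
    simpa using ((hE.const_mul γ).const_sub 1)
  have he : HasDerivAt (fun y : ℝ => -(y / xbar) * (1 - γ * exp (-y / xbar)))
      ((-(1 / xbar)) * (1 - γ * exp (-x / xbar)) +
        (-(x / xbar)) * (-(γ * (exp (-x / xbar) * (-(1 / xbar)))))) x :=
    hneg.mul hinner
  have hexp : HasDerivAt (fun y : ℝ => exp (-(y / xbar) * (1 - γ * exp (-y / xbar))))
      (exp (-(x / xbar) * (1 - γ * exp (-x / xbar))) *
        ((-(1 / xbar)) * (1 - γ * exp (-x / xbar)) +
          (-(x / xbar)) * (-(γ * (exp (-x / xbar) * (-(1 / xbar))))))) x := he.exp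
  have hA : HasDerivAt (fun y : ℝ => exp (y / xbar)) (exp (x / xbar) * (1 / xbar)) x := by
    simpa using ((hasDerivAt_id x).div_const xbar).exp
  have hf : HasDerivAt (fun y : ℝ =>
      D * exp (y / xbar) *
        ((1 / Z) * exp (-(y / xbar) * (1 - γ * exp (-y / xbar)))))
      ((D * (exp (x / xbar) * (1 / xbar))) *
          ((1 / Z) * exp (-(x / xbar) * (1 - γ * exp (-x / xbar)))) +
        (D * exp (x / xbar)) *
          ((1 / Z) * (exp (-(x / xbar) * (1 - γ * exp (-x / xbar))) *
            ((-(1 / xbar)) * (1 - γ * exp (-x / xbar)) +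
              (-(x / xbar)) * (-(γ * (exp (-x / xbar) * (-(1 / xbar))))))))) x :=
    (hA.const_mul D).mul (hexp.const_mul (1 / Z))
  rw [hf.deriv]
  set A := exp (x / xbar) with hA'
  set B := exp (-x / xbar) with hB'
  set C := exp (-(x / xbar) * (1 - γ * exp (-x / xbar))) with hC'
  have hA0 : A ≠ 0 := exp_ne_zero _
  have hBA : B = A⁻¹ := by
    rw [hA', hB', ← exp_neg, neg_div]
  have hD0 : D ≠ 0 := ne_of_gt hD
  have hZ0 : Z ≠ 0 := ne_of_gt hZ
  rw [hBA]
  field_simp [hγ]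
  have h2 : 2 * D * γ = pt * xbar ^ 2 := by rw [hγ]; field_simp
  linear_combination (-(C * (xbar - x))) * h2
end

section
/- The gamma density ρ(x) = β^α x^{α−1} e^{−βx}/Γ(α) with α = r/σ² − 1 and β = r/(σ²k) is a zero-flux stationary solution of the Fokker-Planck equation for the stochastic logistic SDE: d/dx(σ²x²ρ(x)) − r·x·(1 − x/k)·ρ(x) = 0 for all x > 0, provided r > σ² > 0 and k > 0. -/
open Real

/-- The gamma density `ρ(x) = β^α x^{α−1} e^{−βx}/Γ(α)` with
`α = r/σ² − 1` and `β = r/(σ²k)` is a zero-flux stationary solution of the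
Fokker–Planck equation of the stochastic logistic SDE:
`(σ²x²ρ)'(x) = r x (1 − x/k) ρ(x)` for all `x > 0`. -/
theorem stochastic_logistic_gamma_stationary
    (r σ k : ℝ) (hσ : 0 < σ) (hk : 0 < k) (hr : σ ^ 2 < r)
    (α β : ℝ) (hα : α = r / σ ^ 2 - 1) (hβ : β = r / (σ ^ 2 * k))
    (ρ : ℝ → ℝ)
    (hρ : ρ = fun x => β ^ α * x ^ (α - 1) * exp (-β * x) / Real.Gamma α) :
    ∀ x : ℝ, 0 < x →
      deriv (fun y => σ ^ 2 * y ^ 2 * ρ y) x =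
        r * x * (1 - x / k) * ρ x := by
  intro x hx
  have hσ2 : (0:ℝ) < σ ^ 2 := by positivity
  set C : ℝ := σ ^ 2 * β ^ α / Real.Gamma α with hC
  -- the function agrees with C * y^(α+1) * exp(-βy) near x
  have heq : (fun y => σ ^ 2 * y ^ 2 * ρ y) =ᶠ[nhds x]
      (fun y => C * (y ^ (α + 1) * exp (-β * y))) := by
    filter_upwards [eventually_gt_nhds hx] with y hy
    have h1 : (y : ℝ) ^ (2:ℕ) * y ^ (α - 1) = y ^ (α + 1) := by
      rw [← Real.rpow_natCast y 2, ← Real.rpow_add hy]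
      congr 1
      push_cast
      ring
    rw [hρ, hC, ← h1]
    ring
  rw [heq.deriv_eq]
  have hexp : HasDerivAt (fun y : ℝ => exp (-β * y)) (exp (-β * x) * (-β)) x := by
    have : HasDerivAt (fun y : ℝ => -β * y) (-β) x := by
      simpa using (hasDerivAt_id x).const_mul (-β)
    exact this.exp
  have hpow : HasDerivAt (fun y : ℝ => y ^ (α + 1)) ((α + 1) * x ^ (α + 1 - 1)) x :=
    Real.hasDerivAt_rpow_const (Or.inl hx.ne')
  have h := ((hpow.mul hexp).const_mul C).deriv
  simp only [Pi.mul_apply] at h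
  rw [h]
  -- now arithmetic
  have hΓ : Real.Gamma α ≠ 0 := by
    have : 0 < α := by
      rw [hα]
      have : 1 < r / σ ^ 2 := (one_lt_div hσ2).mpr hr
      linarith
    exact (Real.Gamma_pos_of_pos this).ne'
  have hs : σ ^ 2 * (α + 1) = r := by
    rw [hα]; field_simp; ring
  have hsb : σ ^ 2 * β = r / k := by
    rw [hβ]; field_simp
  have hx1 : x ^ (α + 1 - 1) = x ^ α := by norm_num
  have hx2 : x ^ (α + 1) = x * x ^ α := by
    rw [show α + 1 = 1 + α by ring, Real.rpow_add hx, Real.rpow_one]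
  have hx3 : x ^ α = x * x ^ (α - 1) := by
    nth_rewrite 1 [show α = 1 + (α - 1) by ring]
    rw [Real.rpow_add hx, Real.rpow_one]
  rw [hρ, hC, hx1, hx2, hx3]
  linear_combination ((β ^ α * x ^ (α - 1) * exp (-β * x) / Real.Gamma α) * x) * hs -
    ((β ^ α * x ^ (α - 1) * exp (-β * x) / Real.Gamma α) * x ^ 2) * hsb
end
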